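/- Let m ≥ 3 and let B^a be the collection of all 4-element subsets T of V = 𝔽₂^{2m} such that Σ_{v∈T} v = 0 in 𝔽₂^{2m} and Σ_{v∈T} θ₀(v) = 0 in 𝔽₂. Then: (i) any two distinct members of B^a intersect in at most 2 elements; and (ii) for every pair of distinct x, y ∈ V, the number of members of B^a containing both x and y is exactly 2^{2m−2} − 1. (Hence (V, B^a) is a supersimple 2-(2^{2m}, 4, 2^{2m−2}−1) design.) -/

import Mathlib

open Matrix

/-- Row vectors in `𝔽₂^{2m}`, with coordinates indexed by `Fin m ⊕ Fin m`
(the first block and the second block of `m` coordinates). -/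
abbrev Vm (m : ℕ) := (Fin m ⊕ Fin m) → ZMod 2

/-- The block matrix `e = (0 Iₘ; 0 0)`. -/
def eMat (m : ℕ) : Matrix (Fin m ⊕ Fin m) (Fin m ⊕ Fin m) (ZMod 2) :=
  Matrix.fromBlocks 0 1 0 0

/-- The block matrix `f = e + eᵀ = (0 Iₘ; Iₘ 0)`. -/
def fMat (m : ℕ) : Matrix (Fin m ⊕ Fin m) (Fin m ⊕ Fin m) (ZMod 2) :=
  eMat m + (eMat m)ᵀ

/-- The alternating bilinear form `φ(u,v) = u f vᵀ`. -/
def phi (m : ℕ) (u v : Vm m) : ZMod 2 := u ⬝ᵥ (fMat m).mulVec v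

/-- The quadratic form `θ₀(u) = u e uᵀ`. -/
def theta0 (m : ℕ) (u : Vm m) : ZMod 2 := u ⬝ᵥ (eMat m).mulVec u

/-- The quadratic form `θ_a(u) = θ₀(u) + φ(u,a)`. -/
def theta (m : ℕ) (a u : Vm m) : ZMod 2 := theta0 m u + phi m u a

/-- The transvection `t_c : u ↦ u + φ(u,c)·c`. -/
def tvec (m : ℕ) (c u : Vm m) : Vm m := u + phi m u c • c

/-- The line set `B^a`: 4-element subsets of `V` summing to zero whose `θ₀`-values sum to zero. -/
def BsetA (m : ℕ) : Set (Finset (Vm m)) :=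
  {T | T.card = 4 ∧ ∑ v ∈ T, v = 0 ∧ ∑ v ∈ T, theta0 m v = 0}

set_option maxHeartbeats 1000000

open Finset in
lemma phi_eq (m : ℕ) (u v : Vm m) :
    phi m u v = ∑ i : Fin m, (u (.inl i) * v (.inr i) + u (.inr i) * v (.inl i)) := by
  simp [phi, fMat, eMat, mulVec, dotProduct, Fintype.sum_sum_type, Matrix.fromBlocks,
    Matrix.one_apply, Finset.mul_sum, mul_ite, Finset.sum_add_distrib]

lemma theta0_eq (m : ℕ) (u : Vm m) : theta0 m u = ∑ i : Fin m, u (.inl i) * u (.inr i) := by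
  simp [theta0, eMat, mulVec, dotProduct, Fintype.sum_sum_type, Matrix.fromBlocks,
    Matrix.one_apply, Finset.mul_sum, mul_ite, Finset.sum_add_distrib]

lemma phi_self (m : ℕ) (u : Vm m) : phi m u u = 0 := by
  rw [phi_eq]
  apply Finset.sum_eq_zero; intro i _
  rw [mul_comm (u (.inr i))]
  exact CharTwo.add_self_eq_zero _

lemma phi_comm (m : ℕ) (u v : Vm m) : phi m u v = phi m v u := by
  rw [phi_eq, phi_eq]; apply Finset.sum_congr rfl; intro i _; ring

lemma phi_add_right (m : ℕ) (u v w : Vm m) : phi m u (v + w) = phi m u v + phi m u w := by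
  simp only [phi_eq, Pi.add_apply, ← Finset.sum_add_distrib]
  apply Finset.sum_congr rfl; intro i _; ring

lemma theta0_add (m : ℕ) (u v : Vm m) :
    theta0 m (u + v) = theta0 m u + theta0 m v + phi m u v := by
  simp only [theta0_eq, phi_eq, Pi.add_apply, ← Finset.sum_add_distrib]
  apply Finset.sum_congr rfl; intro i _; ring

lemma vaddself (m : ℕ) (u : Vm m) : u + u = 0 :=
  funext fun _ => CharTwo.add_self_eq_zero _

lemma vadd_eq_zero_iff (m : ℕ) (u v : Vm m) : u + v = 0 ↔ u = v := by
  constructor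
  · intro h
    have : u = u + (v + v) := by rw [vaddself, add_zero]
    rw [this, ← add_assoc, h, zero_add]
  · rintro rfl; exact vaddself m u

lemma z2_add_eq_zero_iff : ∀ a b : ZMod 2, a + b = 0 ↔ a = b := by decide

lemma phi_add_left (m : ℕ) (u v w : Vm m) : phi m (u + v) w = phi m u w + phi m v w := by
  rw [phi_comm, phi_add_right, phi_comm, phi_comm m w v]

lemma theta_identity (m : ℕ) (x y z : Vm m) :
    theta0 m x + (theta0 m y + (theta0 m z + theta0 m (x + y + z)))
      = phi m x y + phi m (x + y) z := by
  rw [theta0_add m (x + y) z, theta0_add m x y]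
  generalize theta0 m x = a; generalize theta0 m y = b; generalize theta0 m z = d
  generalize phi m x y = p; generalize phi m (x+y) z = q
  revert a b d p q; decide

open Finset in
lemma exists_phi_one (m : ℕ) (s : Vm m) (hs : s ≠ 0) : ∃ z : Vm m, phi m s z = 1 := by
  have : ∃ k, s k ≠ 0 := by
    by_contra h; push_neg at h; exact hs (funext h)
  obtain ⟨k, hk⟩ := this
  have hk1 : s k = 1 := by
    have : ∀ a : ZMod 2, a ≠ 0 → a = 1 := by decide
    exact this _ hk
  cases k with
  | inl i =>
    refine ⟨fun k' => if k' = Sum.inr i then 1 else 0, ?_⟩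
    rw [phi_eq]
    rw [Finset.sum_eq_single i]
    · simp [hk1]
    · intro j _ hj; simp [Sum.inr.injEq, Sum.inl.injEq, hj]
    · simp
  | inr i =>
    refine ⟨fun k' => if k' = Sum.inl i then 1 else 0, ?_⟩
    rw [phi_eq]
    rw [Finset.sum_eq_single i]
    · simp [hk1]
    · intro j _ hj; simp [Sum.inr.injEq, Sum.inl.injEq, hj]
    · simp

lemma card_Vm (m : ℕ) : Fintype.card (Vm m) = 2 ^ (2 * m) := by
  simp [Vm]; ring_nf

open Finset in
lemma card_filter_phi (m : ℕ) (s : Vm m) (hs : s ≠ 0) (c : ZMod 2) :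
    (univ.filter (fun z : Vm m => phi m s z = c)).card = 2 ^ (2 * m - 1) := by
  classical
  obtain ⟨z₀, hz₀⟩ := exists_phi_one m s hs
  have key : ∀ c : ZMod 2, (univ.filter (fun z : Vm m => phi m s z = c)).card
      = (univ.filter (fun z : Vm m => phi m s z = c + 1)).card := by
    intro c
    apply Finset.card_bij (fun z _ => z + z₀)
    · intro z hz
      simp only [mem_filter, mem_univ, true_and] at *
      rw [phi_add_right, hz, hz₀]
    · intro a ha b hb hab
      have := congrArg (· + z₀) hab
      simpa [add_assoc, vaddself, add_zero] using this
    · intro b hb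
      refine ⟨b + z₀, ?_, ?_⟩
      · simp only [mem_filter, mem_univ, true_and] at *
        rw [phi_add_right, hb, hz₀, add_assoc]
        simp [CharTwo.add_self_eq_zero]
      · rw [add_assoc, vaddself, add_zero]
  have h01 : (univ.filter (fun z : Vm m => phi m s z = 0)).card
      = (univ.filter (fun z : Vm m => phi m s z = 1)).card := by
    simpa using key 0
  have hsplit : (univ.filter (fun z : Vm m => phi m s z = 0)).card
      + (univ.filter (fun z : Vm m => phi m s z = 1)).card = 2 ^ (2 * m) := by
    rw [← card_Vm m, ← Finset.card_univ]
    have hz2 : ∀ a : ZMod 2, (¬ a = 0) ↔ a = 1 := by decide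
    have := Finset.card_filter_add_card_filter_not (s := (univ : Finset (Vm m)))
      (p := fun z : Vm m => phi m s z = 0)
    rw [← this]
    congr 2
    apply Finset.filter_congr
    intro z _
    simp [hz2]
  rcases Nat.eq_zero_or_pos m with h0 | hpos
  · subst h0; exact absurd (Subsingleton.elim s 0) hs
  have hpow : 2 ^ (2 * m) = 2 ^ (2 * m - 1) + 2 ^ (2 * m - 1) := by
    have h : 2 * m - 1 + 1 = 2 * m := by omega
    conv_lhs => rw [← h]
    rw [pow_succ, Nat.mul_two]
  have hc : c = 0 ∨ c = 1 := by revert c; decide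
  rcases hc with rfl | rfl <;> omega

open Finset in
lemma parti (m : ℕ) (S T : Finset (Vm m)) (hS : S ∈ BsetA m) (hT : T ∈ BsetA m)
    (hne : S ≠ T) : (S ∩ T).card ≤ 2 := by
  classical
  by_contra h
  push_neg at h
  set I := S ∩ T with hI
  have hIS : I ⊆ S := inter_subset_left
  have hIT : I ⊆ T := inter_subset_right
  have hSc := hS.1
  have hTc := hT.1
  have hle : I.card ≤ 4 := hSc ▸ card_le_card hIS
  have key : ∀ X : Finset (Vm m), X ∈ BsetA m → I ⊆ X → I.card = 3 →
      X = insert (∑ v ∈ I, v) I := by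
    intro X hX hIX hI3
    obtain ⟨a, ha⟩ : ∃ a, X \ I = {a} := by
      rw [← card_eq_one, card_sdiff_of_subset hIX, hX.1, hI3]
    have haI : a ∉ I := by
      have : a ∈ X \ I := ha ▸ mem_singleton_self a
      exact (mem_sdiff.mp this).2
    have hXeq : X = insert a I := by
      rw [← sdiff_union_of_subset hIX, ha]
      ext t; simp [or_comm]
    have hsum : a + ∑ v ∈ I, v = 0 := by
      have := hX.2.1
      rwa [hXeq, sum_insert haI] at this
    have : a = ∑ v ∈ I, v := by
      have h2 : a + (∑ v ∈ I, v + ∑ v ∈ I, v) = ∑ v ∈ I, v := by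
        rw [← add_assoc, hsum, zero_add]
      have hvv : (∑ v ∈ I, v) + (∑ v ∈ I, v) = (0 : Vm m) :=
        funext fun i => CharTwo.add_self_eq_zero _
      rwa [hvv, add_zero] at h2
    rw [hXeq, this]
  rcases (by omega : I.card = 3 ∨ I.card = 4) with hc | hc
  · have hSe := key S hS hIS hc
    have hTe := key T hT hIT hc
    exact hne (hSe.trans hTe.symm)
  · have h1 : I = S := eq_of_subset_of_card_le hIS (by omega)
    have h2 : I = T := eq_of_subset_of_card_le hIT (by omega)
    exact hne (h1 ▸ h2)


open Finset in
lemma partii (m : ℕ) (hm : 3 ≤ m) (x y : Vm m) (hxy : x ≠ y) :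
    {T : Finset (Vm m) | T ∈ BsetA m ∧ x ∈ T ∧ y ∈ T}.ncard = 2 ^ (2 * m - 2) - 1 := by
  classical
  set s := x + y with hs_def
  have hs : s ≠ 0 := fun h => hxy ((vadd_eq_zero_iff m x y).mp h)
  set c := phi m x y with hc_def
  set F : Finset (Vm m) := univ.filter (fun z : Vm m => phi m s z = c) with hF_def
  have hxF : x ∈ F := by
    simp only [hF_def, mem_filter, mem_univ, true_and, hs_def]
    rw [phi_add_left, phi_self, zero_add, phi_comm]
  have hyF : y ∈ F := by
    simp only [hF_def, mem_filter, mem_univ, true_and, hs_def]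
    rw [phi_add_left, phi_self, add_zero]
  set Z : Finset (Vm m) := F \ {x, y} with hZ_def
  have hZcard : Z.card = 2 ^ (2 * m - 1) - 2 := by
    rw [hZ_def, card_sdiff_of_subset (by intro t ht; simp at ht; rcases ht with rfl | rfl <;> assumption)]
    rw [card_filter_phi m s hs c, card_insert_of_notMem (by simp [hxy]), card_singleton]
  set g : Vm m → Finset (Vm m) := fun z => {x, y, z, x + y + z} with hg_def
  set 𝒯 : Finset (Finset (Vm m)) :=
    univ.filter (fun T => T ∈ BsetA m ∧ x ∈ T ∧ y ∈ T) with hT_def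
  have hset : {T : Finset (Vm m) | T ∈ BsetA m ∧ x ∈ T ∧ y ∈ T} = ↑𝒯 := by
    ext T; simp [hT_def]
  rw [hset, Set.ncard_coe_finset]
  -- distinctness facts for z ∈ Z
  have hzfacts : ∀ z ∈ Z, z ≠ x ∧ z ≠ y ∧ x + y + z ≠ x ∧ x + y + z ≠ y ∧ x + y + z ≠ z
      ∧ phi m s z = c := by
    intro z hz
    rw [hZ_def, mem_sdiff] at hz
    have hzx : z ≠ x := fun h => hz.2 (by simp [h])
    have hzy : z ≠ y := fun h => hz.2 (by simp [h])
    refine ⟨hzx, hzy, ?_, ?_, ?_, by simpa [hF_def] using hz.1⟩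
    · intro h
      rw [add_assoc] at h
      have : y + z = 0 := add_eq_left.mp h
      exact hzy ((vadd_eq_zero_iff m y z).mp this).symm
    · intro h
      have h' : y + (x + z) = x + y + z := by ring
      rw [h] at h'
      have : x + z = 0 := add_eq_left.mp h'
      exact hzx ((vadd_eq_zero_iff m x z).mp this).symm
    · intro h
      have h' : z + (x + y) = x + y + z := by ring
      rw [h] at h'
      have : x + y = 0 := add_eq_left.mp h'
      exact hs this
  -- Claim A : g maps Z into 𝒯
  have claimA : ∀ z ∈ Z, g z ∈ 𝒯 := by
    intro z hz
    obtain ⟨hzx, hzy, hwx, hwy, hwz, hphiz⟩ := hzfacts z hz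
    set w := x + y + z with hw_def
    have hxw : x ≠ w := Ne.symm hwx
    have hyw : y ≠ w := Ne.symm hwy
    have hzw : z ≠ w := Ne.symm hwz
    have hxz : x ≠ z := Ne.symm hzx
    have hyz : y ≠ z := Ne.symm hzy
    have hcard : (g z).card = 4 := by
      rw [hg_def]
      simp only
      rw [card_insert_of_notMem (by simp [← hw_def, hxy, hxz, hxw]),
        card_insert_of_notMem (by simp [← hw_def, hyz, hyw]),
        card_insert_of_notMem (by simp [← hw_def, hzw]), card_singleton]
    have hsum4 : ∀ (β : Type) (_ : AddCommMonoid β) (f : Vm m → β),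
        ∑ v ∈ g z, f v = f x + (f y + (f z + f w)) := by
      intro β _ f
      rw [hg_def]
      simp only
      rw [sum_insert (by simp [← hw_def, hxy, hxz, hxw]), sum_insert (by simp [← hw_def, hyz, hyw]),
        sum_insert (by simp [← hw_def, hzw]), sum_singleton]
    refine mem_filter.mpr ⟨mem_univ _, ⟨hcard, ?_, ?_⟩, by simp [hg_def], by simp [hg_def]⟩
    · rw [hsum4 _ _ (fun v => v)]
      show x + (y + (z + w)) = 0
      rw [hw_def]
      have : x + (y + (z + (x + y + z))) = (x + x) + (y + y) + (z + z) := by ring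
      rw [this]; simp [vaddself]
    · rw [hsum4 _ _ (theta0 m), hw_def, theta_identity]
      rw [← hc_def, ← hs_def, hphiz, z2_add_eq_zero_iff]
  -- Claim B : fibers have cardinality 2
  have claimB : ∀ T ∈ 𝒯, (Z.filter (fun z => g z = T)).card = 2 := by
    intro T hT
    rw [hT_def, mem_filter] at hT
    obtain ⟨-, ⟨hTcard, hTsum, hTtheta⟩, hxT, hyT⟩ := hT
    have hxysub : ({x, y} : Finset (Vm m)) ⊆ T := by
      intro t ht; simp at ht; rcases ht with rfl | rfl <;> assumption
    have hcard2 : (T \ {x, y}).card = 2 := by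
      rw [card_sdiff_of_subset hxysub, hTcard, card_insert_of_notMem (by simp [hxy]), card_singleton]
    obtain ⟨z, w, hzw, hZW⟩ := card_eq_two.mp hcard2
    have hzmem : z ∈ T \ {x, y} := by rw [hZW]; simp
    have hwmem : w ∈ T \ {x, y} := by rw [hZW]; simp
    rw [mem_sdiff, mem_insert, mem_singleton] at hzmem hwmem
    push_neg at hzmem hwmem
    obtain ⟨hzT, hzx, hzy⟩ := hzmem
    obtain ⟨hwT, hwx, hwy⟩ := hwmem
    have hTeq : T = {x, y, z, w} := by
      have h1 : T \ {x, y} ∪ {x, y} = T := sdiff_union_of_subset hxysub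
      rw [hZW] at h1
      rw [← h1]; ext t; simp; tauto
    have hsum4 : ∀ (β : Type) (_ : AddCommMonoid β) (f : Vm m → β),
        ∑ v ∈ T, f v = f x + (f y + (f z + f w)) := by
      intro β _ f
      rw [hTeq]
      rw [sum_insert (by simp [hxy, Ne.symm hzx, Ne.symm hwx]),
        sum_insert (by simp [Ne.symm hzy, Ne.symm hwy]),
        sum_insert (by simp [hzw]), sum_singleton]
    have hweq : w = x + y + z := by
      have h0 : x + (y + (z + w)) = 0 := by rw [← hsum4 _ _ (fun v => v)]; exact hTsum
      have h1 : (x + y + z) + w = 0 := by rw [← h0]; ring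
      exact ((vadd_eq_zero_iff m _ _).mp h1).symm
    have hth : theta0 m x + (theta0 m y + (theta0 m z + theta0 m (x + y + z))) = 0 := by
      rw [← hweq, ← hsum4 _ _ (theta0 m)]; exact hTtheta
    rw [theta_identity] at hth
    have hphiz : phi m s z = c := by
      rw [hs_def, hc_def, ← z2_add_eq_zero_iff]
      rw [← hth]; ring
    have hphiw : phi m s w = c := by
      rw [hweq]
      have : x + y + z = s + z := by rw [hs_def]
      rw [this, phi_add_right, phi_self, zero_add, hphiz]
    have hzZ : z ∈ Z := by
      rw [hZ_def, mem_sdiff]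
      exact ⟨by simp [hF_def, hphiz], by simp [hzx, hzy]⟩
    have hwZ : w ∈ Z := by
      rw [hZ_def, mem_sdiff]
      exact ⟨by simp [hF_def, hphiw], by simp [hwx, hwy]⟩
    have hfib : Z.filter (fun z' => g z' = T) = {z, w} := by
      ext z'
      rw [mem_filter, mem_insert, mem_singleton]
      constructor
      · rintro ⟨hz'Z, hgz'⟩
        have hz'T : z' ∈ T := by
          rw [← hgz', hg_def]; simp
        obtain ⟨hz'x, hz'y, -, -, -, -⟩ := hzfacts z' hz'Z
        have : z' ∈ T \ {x, y} := by
          rw [mem_sdiff]; exact ⟨hz'T, by simp [hz'x, hz'y]⟩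
        rw [hZW] at this; simpa using this
      · rintro (rfl | rfl)
        · refine ⟨hzZ, ?_⟩
          rw [hg_def, hTeq]; simp only
          rw [← hweq]
        · refine ⟨hwZ, ?_⟩
          have hxyw : x + y + (x + y + z) = z := by
            have h2 : x + y + (x + y + z) = x + x + (y + y) + z := by ring
            rw [h2, vaddself, vaddself]; simp
          rw [hg_def]
          simp only
          rw [hweq, hxyw, hTeq, ← hweq]
          ext t; simp; tauto
    rw [hfib, card_insert_of_notMem (by simp [hzw]), card_singleton]
  -- conclude
  have hcount : Z.card = ∑ T ∈ 𝒯, (Z.filter (fun z => g z = T)).card :=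
    card_eq_sum_card_fiberwise claimA
  rw [Finset.sum_congr rfl claimB, Finset.sum_const, smul_eq_mul] at hcount
  rw [hZcard] at hcount
  have hp : 2 ^ (2 * m - 1) = 2 * 2 ^ (2 * m - 2) := by
    have h : 2 * m - 2 + 1 = 2 * m - 1 := by omega
    rw [← h, pow_succ]; ring
  have hge : 1 ≤ 2 ^ (2 * m - 2) := Nat.one_le_two_pow
  omega


theorem stmt_1 (m : ℕ) (hm : 3 ≤ m) :
    (∀ S T : Finset (Vm m), S ∈ BsetA m → T ∈ BsetA m → S ≠ T →
        (S ∩ T).card ≤ 2) ∧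
    (∀ x y : Vm m, x ≠ y →
        {T : Finset (Vm m) | T ∈ BsetA m ∧ x ∈ T ∧ y ∈ T}.ncard =
          2 ^ (2 * m - 2) - 1) :=
  ⟨fun S T hS hT hne => parti m S T hS hT hne, fun x y hxy => partii m hm x y hxy⟩
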